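/- Let a, b, μ ∈ ℝ, r > 0 and λ > 0, and set λ_a = 1 + a r², assumed positive. Consider the curve γ(s) = (r sin(λ s), −r cos(λ s), λ μ s) in ℝ³, which lies in the region where 1 + a(x² + y²) = λ_a > 0. Then h_{γ(s)}(γ'(s), γ'(s)) = 1 for all s ∈ ℝ if and only if λ = λ_a / √(r² + (b r²/2 − μ λ_a)²). -/

import Mathlib

/-- `λ_a(p) = 1 + a(x² + y²)` for `p = (x,y,z)`. -/
noncomputable def bcvLambda (a : ℝ) (p : ℝ × ℝ × ℝ) : ℝ :=
  1 + a * (p.1 ^ 2 + p.2.1 ^ 2)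

/-- The Bianchi–Cartan–Vranceanu metric `h_{a,b}` at the point `p`, applied to the
vectors `u` and `v`. -/
noncomputable def bcvMetric (a b : ℝ) (p u v : ℝ × ℝ × ℝ) : ℝ :=
  (u.1 * v.1 + u.2.1 * v.2.1) / (bcvLambda a p) ^ 2 +
    (u.2.2 + (b / 2) * (p.2.1 * u.1 - p.1 * u.2.1) / bcvLambda a p) *
      (v.2.2 + (b / 2) * (p.2.1 * v.1 - p.1 * v.2.1) / bcvLambda a p)

/-- The helix `γ(s) = (r sin(λ s), −r cos(λ s), λ μ s)` lies in the region
where `1 + a(x² + y²) = λ_a = 1 + a r² > 0`, and it is parametrized by arc length with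
respect to the BCV metric `h_{a,b}` if and only if
`λ = λ_a / √(r² + (b r²/2 − μ λ_a)²)`. -/
theorem helix_arclength_iff (a b μ r l : ℝ) (hr : 0 < r) (hl : 0 < l)
    (hla : 0 < 1 + a * r ^ 2) :
    let la := 1 + a * r ^ 2
    let γ : ℝ → ℝ × ℝ × ℝ := fun s => (r * Real.sin (l * s), -r * Real.cos (l * s), l * μ * s)
    (∀ s : ℝ, bcvLambda a (γ s) = la ∧ 0 < bcvLambda a (γ s)) ∧
    ((∀ s : ℝ, bcvMetric a b (γ s) (deriv γ s) (deriv γ s) = 1) ↔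
      l = la / Real.sqrt (r ^ 2 + (b * r ^ 2 / 2 - μ * la) ^ 2)) := by
  intro la γ
  have hlam : ∀ s : ℝ, bcvLambda a (γ s) = la := by
    intro s
    simp only [γ, bcvLambda, la]
    have := Real.sin_sq_add_cos_sq (l * s)
    ring_nf
    nlinarith [Real.sin_sq_add_cos_sq (l * s)]
  have hderiv : ∀ s : ℝ, deriv γ s = (r * (l * Real.cos (l * s)),
      r * (l * Real.sin (l * s)), l * μ) := by
    intro s
    have h1 : HasDerivAt (fun s : ℝ => l * s) l s := by
      simpa using (hasDerivAt_id s).const_mul l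
    have hA : HasDerivAt (fun s : ℝ => r * Real.sin (l * s))
        (r * (Real.cos (l * s) * l)) s := (h1.sin).const_mul r
    have hB : HasDerivAt (fun s : ℝ => -r * Real.cos (l * s))
        (-r * (-Real.sin (l * s) * l)) s := (h1.cos).const_mul (-r)
    have hC : HasDerivAt (fun s : ℝ => l * μ * s) (l * μ) s := by
      simpa using (hasDerivAt_id s).const_mul (l * μ)
    have : HasDerivAt γ (r * (Real.cos (l * s) * l),
        -r * (-Real.sin (l * s) * l), l * μ) s := hA.prodMk (hB.prodMk hC)
    rw [this.deriv]
    ring_nf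
  set K : ℝ := r ^ 2 + (b * r ^ 2 / 2 - μ * la) ^ 2 with hK
  have hKpos : 0 < K := by positivity
  have hlapos : 0 < la := hla
  have hval : ∀ s : ℝ, bcvMetric a b (γ s) (deriv γ s) (deriv γ s)
      = l ^ 2 * K / la ^ 2 := by
    intro s
    rw [hderiv s]
    simp only [bcvMetric, hlam s, γ]
    have hsc := Real.sin_sq_add_cos_sq (l * s)
    field_simp
    linear_combination (4 * r ^ 2 - r ^ 2 * b * (4 * la * μ -
        r ^ 2 * b * (Real.sin (l * s) ^ 2 + Real.cos (l * s) ^ 2 + 1))) * hsc - 4 * hK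
  refine ⟨fun s => ⟨hlam s, (hlam s) ▸ hlapos⟩, ?_⟩
  have hsq : Real.sqrt K ^ 2 = K := Real.sq_sqrt hKpos.le
  have hsqpos : 0 < Real.sqrt K := Real.sqrt_pos.mpr hKpos
  constructor
  · intro h
    have h0 := h 0
    rw [hval 0] at h0
    have hl2 : l ^ 2 * K = la ^ 2 := by
      field_simp at h0; linarith
    have : (l * Real.sqrt K) ^ 2 = la ^ 2 := by
      rw [mul_pow, hsq]; exact hl2
    have hle : l * Real.sqrt K = la := by
      nlinarith [mul_pos hl hsqpos]
    field_simp [hsqpos.ne'] at *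
    linarith
  · intro h s
    rw [hval s]
    rw [h]
    rw [div_pow, hsq]
    field_simp
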